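/- Error representation at the exact discrete solutions (iteration error vanishes): Under the hypotheses of Theorem 1 — V a real Banach space, A : V → (V →L[ℝ] ℝ) and J : V → ℝ three times continuously Fréchet differentiable, V_h ⊆ V_N ⊆ V nested linear subspaces, u ∈ V with A(u)(v) = 0 for all v ∈ V, u₂ ∈ V_N with A(u₂)(v) = 0 for all v ∈ V_N, z₂ ∈ V_N with A'(u₂)(v)(z₂) = J'(u₂)(v) for all v ∈ V_N — suppose additionally that u_h ∈ V_h satisfies A(u_h)(v) = 0 for all v ∈ V_h and z_h ∈ V_h. Then ρ(u_h)(z_h) = 0, and consequently J(u) − J(u_h) = (J(u) − J(u₂)) + η_h + R⁽³⁾, where η_h := (1/2)(ρ(u_h)(z₂ − z_h) + ρ*(u_h, z_h)(u₂ − u_h)) and R⁽³⁾ is the remainder of Theorem 1 with ũ = u_h, z̃ = z_h, e = u₂ − u_h, e* = z₂ − z_h. -/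

import Mathlib

open intervalIntegral

lemma dwr_iter3_apply {V W : Type*} [NormedAddCommGroup V] [NormedSpace ℝ V]
    [NormedAddCommGroup W] [NormedSpace ℝ W] (F : V → W) (z a : V) :
    iteratedFDeriv ℝ 3 F z ![a, a, a]
      = fderiv ℝ (fderiv ℝ (fderiv ℝ F)) z a a a := by
  have h := iteratedFDeriv_succ_apply_right (𝕜 := ℝ) (f := F) (x := z) (n := 2) ![a, a, a]
  rw [h, iteratedFDeriv_two_apply]
  congr 1

lemma dwr_iter2_apply {V W : Type*} [NormedAddCommGroup V] [NormedSpace ℝ V]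
    [NormedAddCommGroup W] [NormedSpace ℝ W] (F : V → W) (z a : V) :
    iteratedFDeriv ℝ 2 F z ![a, a] = fderiv ℝ (fderiv ℝ F) z a a := by
  rw [iteratedFDeriv_two_apply]; simp

lemma dwr_hasDerivAt_line {V : Type*} [NormedAddCommGroup V] [NormedSpace ℝ V]
    (u e : V) (s : ℝ) : HasDerivAt (fun t : ℝ => u + t • e) e s := by
  simpa using ((hasDerivAt_id s).smul_const e).const_add u

lemma dwr_hasDerivAt_comp_line {V W : Type*} [NormedAddCommGroup V] [NormedSpace ℝ V]
    [NormedAddCommGroup W] [NormedSpace ℝ W]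
    {F : V → W} (hF : Differentiable ℝ F) (u e : V) (s : ℝ) :
    HasDerivAt (fun t : ℝ => F (u + t • e)) (fderiv ℝ F (u + s • e) e) s := by
  have := (hF (u + s • e)).hasFDerivAt.comp_hasDerivAt s (dwr_hasDerivAt_line u e s)
  exact this

lemma dwr_hasDerivAt_clm_const {V W : Type*} [NormedAddCommGroup V] [NormedSpace ℝ V]
    [NormedAddCommGroup W] [NormedSpace ℝ W]
    {c : ℝ → (V →L[ℝ] W)} {c' : V →L[ℝ] W} {s : ℝ}
    (hc : HasDerivAt c c' s) (v : V) :
    HasDerivAt (fun t => c t v) (c' v) s := by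
  simpa using hc.clm_apply (hasDerivAt_const s v)

set_option maxHeartbeats 1000000 in
/-- Core identity (Theorem 1 style): if `A ũ z̃ = 0`, `A u₂ z₂ = 0` and the
adjoint-type residual at `(u₂, z₂)` vanishes in direction `u₂ - ũ`, `z₂ - z̃`,
then the error representation holds. -/
lemma dwr_core {V : Type*} [NormedAddCommGroup V] [NormedSpace ℝ V]
    (A : V → (V →L[ℝ] ℝ)) (J : V → ℝ)
    (hA : ContDiff ℝ 3 A) (hJ : ContDiff ℝ 3 J)
    (uh zh u₂ z₂ : V)
    (h0 : A uh zh = 0) (h1 : A u₂ z₂ = 0)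
    (hres : fderiv ℝ J u₂ (u₂ - uh) - fderiv ℝ A u₂ (u₂ - uh) z₂ - A u₂ (z₂ - zh) = 0) :
    J u₂ - J uh
      = (1/2) * ((-(A uh (z₂ - zh)))
          + (fderiv ℝ J uh (u₂ - uh) - fderiv ℝ A uh (u₂ - uh) zh))
        + (1/2) * ∫ s in (0:ℝ)..1,
            (iteratedFDeriv ℝ 3 J (uh + s • (u₂ - uh)) ![u₂ - uh, u₂ - uh, u₂ - uh]
              - (iteratedFDeriv ℝ 3 A (uh + s • (u₂ - uh)) ![u₂ - uh, u₂ - uh, u₂ - uh])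
                  (zh + s • (z₂ - zh))
              - 3 * (iteratedFDeriv ℝ 2 A (uh + s • (u₂ - uh)) ![u₂ - uh, u₂ - uh])
                  (z₂ - zh))
            * (s * (s - 1)) := by
  letI i3 : NormedAddCommGroup (V →L[ℝ] V →L[ℝ] V →L[ℝ] ℝ) :=
    ContinuousLinearMap.toNormedAddCommGroup (𝕜 := ℝ) (𝕜₂ := ℝ) (σ₁₂ := RingHom.id ℝ)
      (E := V) (F := V →L[ℝ] V →L[ℝ] ℝ)
  letI s3 : NormedSpace ℝ (V →L[ℝ] V →L[ℝ] V →L[ℝ] ℝ) :=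
    ContinuousLinearMap.toNormedSpace (𝕜 := ℝ) (𝕜₂ := ℝ) (σ₁₂ := RingHom.id ℝ)
      (E := V) (F := V →L[ℝ] V →L[ℝ] ℝ)
  set e := u₂ - uh with he
  set w := z₂ - zh with hw
  -- differentiability / continuity bookkeeping
  have hJ1 : Differentiable ℝ J := hJ.differentiable (by norm_num)
  have hDJc : ContDiff ℝ 2 (fderiv ℝ J) := hJ.fderiv_right (by norm_num)
  have hDJ1 : Differentiable ℝ (fderiv ℝ J) := hDJc.differentiable (by norm_num)
  have hD2Jc : ContDiff ℝ 1 (fderiv ℝ (fderiv ℝ J)) := hDJc.fderiv_right (by norm_num)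
  have hD2J1 : Differentiable ℝ (fderiv ℝ (fderiv ℝ J)) := hD2Jc.differentiable (by norm_num)
  have hD3Jc : Continuous (fderiv ℝ (fderiv ℝ (fderiv ℝ J))) :=
    hD2Jc.continuous_fderiv (by norm_num)
  have hA1 : Differentiable ℝ A := hA.differentiable (by norm_num)
  have hDAc : ContDiff ℝ 2 (fderiv ℝ A) := hA.fderiv_right (by norm_num)
  have hDA1 : Differentiable ℝ (fderiv ℝ A) := hDAc.differentiable (by norm_num)
  have hD2Ac : ContDiff ℝ 1 (fderiv ℝ (fderiv ℝ A)) := hDAc.fderiv_right (by norm_num)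
  have hD2A1 : Differentiable ℝ (fderiv ℝ (fderiv ℝ A)) := hD2Ac.differentiable (by norm_num)
  have hD3Ac : Continuous (fderiv ℝ (fderiv ℝ (fderiv ℝ A))) :=
    hD2Ac.continuous_fderiv (by norm_num)
  have hcx : Continuous (fun s : ℝ => uh + s • e) :=
    continuous_const.add (continuous_id.smul continuous_const)
  have hcy : Continuous (fun s : ℝ => zh + s • w) :=
    continuous_const.add (continuous_id.smul continuous_const)
  have hy : ∀ s : ℝ, HasDerivAt (fun t : ℝ => zh + t • w) w s :=
    fun s => dwr_hasDerivAt_line zh w s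
  -- the three scalar functions along the line
  set f : ℝ → ℝ := fun s =>
    fderiv ℝ J (uh + s • e) e - fderiv ℝ A (uh + s • e) e (zh + s • w)
      - A (uh + s • e) w with hf
  set f' : ℝ → ℝ := fun s =>
    fderiv ℝ (fderiv ℝ J) (uh + s • e) e e
      - fderiv ℝ (fderiv ℝ A) (uh + s • e) e e (zh + s • w)
      - 2 * fderiv ℝ A (uh + s • e) e w with hf'
  set g : ℝ → ℝ := fun s =>
    fderiv ℝ (fderiv ℝ (fderiv ℝ J)) (uh + s • e) e e e
      - fderiv ℝ (fderiv ℝ (fderiv ℝ A)) (uh + s • e) e e e (zh + s • w)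
      - 3 * fderiv ℝ (fderiv ℝ A) (uh + s • e) e e w with hg
  -- derivative of the Lagrangian along the line is f
  have hGd : ∀ s : ℝ,
      HasDerivAt (fun t : ℝ => J (uh + t • e) - A (uh + t • e) (zh + t • w)) (f s) s := by
    intro s
    have h1' := dwr_hasDerivAt_comp_line hJ1 uh e s
    have hc := dwr_hasDerivAt_comp_line hA1 uh e s
    have h2' := hc.clm_apply (hy s)
    have := h1'.sub h2'
    refine this.congr_deriv ?_
    simp [hf]; ring
  -- derivative of f is f'
  have hfd : ∀ s : ℝ, HasDerivAt f (f' s) s := by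
    intro s
    have t1 : HasDerivAt (fun t : ℝ => fderiv ℝ J (uh + t • e) e)
        (fderiv ℝ (fderiv ℝ J) (uh + s • e) e e) s :=
      dwr_hasDerivAt_clm_const (dwr_hasDerivAt_comp_line hDJ1 uh e s) e
    have t2a : HasDerivAt (fun t : ℝ => fderiv ℝ A (uh + t • e) e)
        (fderiv ℝ (fderiv ℝ A) (uh + s • e) e e) s :=
      dwr_hasDerivAt_clm_const (dwr_hasDerivAt_comp_line hDA1 uh e s) e
    have t2 := t2a.clm_apply (hy s)
    have t3 : HasDerivAt (fun t : ℝ => A (uh + t • e) w)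
        (fderiv ℝ A (uh + s • e) e w) s :=
      dwr_hasDerivAt_clm_const (dwr_hasDerivAt_comp_line hA1 uh e s) w
    have := (t1.sub t2).sub t3
    refine this.congr_deriv ?_
    simp [hf']; ring
  -- derivative of f' is g
  have hf'd : ∀ s : ℝ, HasDerivAt f' (g s) s := by
    intro s
    have u1 : HasDerivAt (fun t : ℝ => fderiv ℝ (fderiv ℝ J) (uh + t • e) e e)
        (fderiv ℝ (fderiv ℝ (fderiv ℝ J)) (uh + s • e) e e e) s :=
      dwr_hasDerivAt_clm_const
        (dwr_hasDerivAt_clm_const (dwr_hasDerivAt_comp_line hD2J1 uh e s) e) e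
    have u2a : HasDerivAt (fun t : ℝ => fderiv ℝ (fderiv ℝ A) (uh + t • e) e e)
        (fderiv ℝ (fderiv ℝ (fderiv ℝ A)) (uh + s • e) e e e) s :=
      dwr_hasDerivAt_clm_const
        (dwr_hasDerivAt_clm_const (dwr_hasDerivAt_comp_line hD2A1 uh e s) e) e
    have u2 := u2a.clm_apply (hy s)
    have u3 : HasDerivAt (fun t : ℝ => fderiv ℝ A (uh + t • e) e w)
        (fderiv ℝ (fderiv ℝ A) (uh + s • e) e e w) s :=
      dwr_hasDerivAt_clm_const
        (dwr_hasDerivAt_clm_const (dwr_hasDerivAt_comp_line hDA1 uh e s) e) w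
    have := (u1.sub u2).sub (u3.const_mul 2)
    refine this.congr_deriv ?_
    simp [hg]; ring
  -- continuity of f, f', g
  have hcf : Continuous f := by
    apply Continuous.sub
    apply Continuous.sub
    · exact ((hDJc.continuous.comp hcx).clm_apply continuous_const)
    · exact (((hDAc.continuous.comp hcx).clm_apply continuous_const).clm_apply hcy)
    · exact ((hA.continuous.comp hcx).clm_apply continuous_const)
  have hcf' : Continuous f' := by
    apply Continuous.sub
    apply Continuous.sub
    · exact (((hD2Jc.continuous.comp hcx).clm_apply continuous_const).clm_apply
        continuous_const)
    · exact ((((hD2Ac.continuous.comp hcx).clm_apply continuous_const).clm_apply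
        continuous_const).clm_apply hcy)
    · exact continuous_const.mul
        (((hDAc.continuous.comp hcx).clm_apply continuous_const).clm_apply continuous_const)
  have hcg : Continuous g := by
    apply Continuous.sub
    apply Continuous.sub
    · exact ((((hD3Jc.comp hcx).clm_apply continuous_const).clm_apply
        continuous_const).clm_apply continuous_const)
    · exact (((((hD3Ac.comp hcx).clm_apply continuous_const).clm_apply
        continuous_const).clm_apply continuous_const).clm_apply hcy)
    · exact continuous_const.mul
        ((((hD2Ac.continuous.comp hcx).clm_apply continuous_const).clm_apply
          continuous_const).clm_apply continuous_const)
  -- endpoint values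
  have hx1 : uh + (1:ℝ) • e = u₂ := by simp [he]
  have hy1 : zh + (1:ℝ) • w = z₂ := by simp [hw]
  have hx0 : uh + (0:ℝ) • e = uh := by simp
  have hy0 : zh + (0:ℝ) • w = zh := by simp
  have hf1 : f 1 = 0 := by
    simp only [hf, hx1, hy1]
    exact hres
  have hf0 : f 0 = fderiv ℝ J uh e - fderiv ℝ A uh e zh - A uh w := by
    simp only [hf, hx0, hy0]
  -- fundamental theorem of calculus
  have key1 : ∫ s in (0:ℝ)..1, f s = J u₂ - J uh := by
    have := integral_eq_sub_of_hasDerivAt (a := (0:ℝ)) (b := 1)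
      (fun s _ => hGd s) (hcf.intervalIntegrable 0 1)
    rw [this, hx1, hy1, hx0, hy0, h0, h1]
    ring
  -- integration by parts, twice
  have ibp1 : ∫ s in (0:ℝ)..1, (s * (s - 1)) * g s
      = - ∫ s in (0:ℝ)..1, (2 * s - 1) * f' s := by
    have hu : ∀ s ∈ Set.uIcc (0:ℝ) 1, HasDerivAt (fun t : ℝ => t * (t - 1)) (2 * s - 1) s := by
      intro s _
      have := (hasDerivAt_id s).mul ((hasDerivAt_id s).sub_const 1)
      simp only [id_eq] at this
      refine this.congr_deriv ?_
      ring
    have := integral_mul_deriv_eq_deriv_mul hu (fun s _ => hf'd s)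
      ((continuous_const.mul continuous_id').sub continuous_const |>.intervalIntegrable 0 1)
      (hcg.intervalIntegrable 0 1)
    rw [this]
    ring
  have ibp2 : ∫ s in (0:ℝ)..1, (2 * s - 1) * f' s
      = f 1 + f 0 - 2 * ∫ s in (0:ℝ)..1, f s := by
    have hu : ∀ s ∈ Set.uIcc (0:ℝ) 1,
        HasDerivAt (fun t : ℝ => 2 * t - 1) ((fun _ : ℝ => (2:ℝ)) s) s := by
      intro s _
      simpa using ((hasDerivAt_id s).const_mul 2).sub_const 1
    have := integral_mul_deriv_eq_deriv_mul hu (fun s _ => hfd s)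
      (continuous_const.intervalIntegrable 0 1) (hcf'.intervalIntegrable 0 1)
    rw [this, intervalIntegral.integral_const_mul]
    ring
  have hint : (∫ s in (0:ℝ)..1,
      (iteratedFDeriv ℝ 3 J (uh + s • e) ![e, e, e]
        - (iteratedFDeriv ℝ 3 A (uh + s • e) ![e, e, e]) (zh + s • w)
        - 3 * (iteratedFDeriv ℝ 2 A (uh + s • e) ![e, e]) w) * (s * (s - 1)))
      = ∫ s in (0:ℝ)..1, (s * (s - 1)) * g s := by
    apply intervalIntegral.integral_congr
    intro s _
    simp only [dwr_iter3_apply, dwr_iter2_apply, hg]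
    ring
  rw [hint, ibp1, ibp2, key1, hf1, hf0]
  ring

/-- Error representation at the exact discrete solutions (the iteration error
vanishes): under the hypotheses of Theorem 1 with nested subspaces `V_h ⊆ V_N ⊆ V`,
if `u_h ∈ V_h` solves the discrete primal problem and `z_h ∈ V_h`, then
`ρ(u_h)(z_h) = 0` and
`J(u) − J(u_h) = (J(u) − J(u₂)) + η_h + R⁽³⁾`, where
`η_h := (1/2)(ρ(u_h)(z₂ − z_h) + ρ*(u_h,z_h)(u₂ − u_h))` and `R⁽³⁾` is the
remainder of Theorem 1 with `ũ = u_h`, `z̃ = z_h`, `e = u₂ − u_h`, `e* = z₂ − z_h`. -/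
theorem dwr_error_representation_discrete
    {V : Type*} [NormedAddCommGroup V] [NormedSpace ℝ V] [CompleteSpace V]
    (A : V → (V →L[ℝ] ℝ)) (J : V → ℝ)
    (hA : ContDiff ℝ 3 A) (hJ : ContDiff ℝ 3 J)
    (Vh VN : Submodule ℝ V) (hVhN : Vh ≤ VN)
    (u : V) (hu : ∀ v : V, A u v = 0)
    (u₂ : V) (hu₂mem : u₂ ∈ VN) (hu₂ : ∀ v ∈ VN, A u₂ v = 0)
    (z₂ : V) (hz₂mem : z₂ ∈ VN)
    (hz₂ : ∀ v ∈ VN, fderiv ℝ A u₂ v z₂ = fderiv ℝ J u₂ v)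
    (uh : V) (huhmem : uh ∈ Vh) (huh : ∀ v ∈ Vh, A uh v = 0)
    (zh : V) (hzhmem : zh ∈ Vh) :
    -(A uh zh) = 0
    ∧ J u - J uh
        = (J u - J u₂)
          + (1/2) * ((-(A uh (z₂ - zh)))
              + (fderiv ℝ J uh (u₂ - uh) - fderiv ℝ A uh (u₂ - uh) zh))
          + (1/2) * ∫ s in (0:ℝ)..1,
              (iteratedFDeriv ℝ 3 J (uh + s • (u₂ - uh)) ![u₂ - uh, u₂ - uh, u₂ - uh]
                - (iteratedFDeriv ℝ 3 A (uh + s • (u₂ - uh)) ![u₂ - uh, u₂ - uh, u₂ - uh])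
                    (zh + s • (z₂ - zh))
                - 3 * (iteratedFDeriv ℝ 2 A (uh + s • (u₂ - uh)) ![u₂ - uh, u₂ - uh])
                    (z₂ - zh))
              * (s * (s - 1)) := by
  have heVN : u₂ - uh ∈ VN := sub_mem hu₂mem (hVhN huhmem)
  have hwVN : z₂ - zh ∈ VN := sub_mem hz₂mem (hVhN hzhmem)
  have h0 : A uh zh = 0 := huh zh hzhmem
  have h1 : A u₂ z₂ = 0 := hu₂ z₂ hz₂mem
  have hres : fderiv ℝ J u₂ (u₂ - uh) - fderiv ℝ A u₂ (u₂ - uh) z₂ - A u₂ (z₂ - zh) = 0 := by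
    rw [hz₂ _ heVN, hu₂ _ hwVN]
    ring
  have core := dwr_core A J hA hJ uh zh u₂ z₂ h0 h1 hres
  refine ⟨by simp [h0], ?_⟩
  linarith [core]
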